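/- Let q be a prime power and m ≥ 2. Define δ = (q-1)q^{m-1} - 1. Then δ is a coset leader of its q-cyclotomic coset modulo q^m - 1, and every integer θ with 0 ≤ θ < q^m - 1 whose q-adic digit sum equals m(q-1) - 1 and which is a coset leader satisfies θ = δ. -/

import Mathlib

private lemma key_mod (N K c : ℕ) (hc : c % N ≠ 0) (hcK : c ≤ N * K) :
    (N * K - c) % N = N - c % N := by
  have hN : 0 < N := by
    rcases Nat.eq_zero_or_pos N with h | h
    · subst h; simp at hcK; simp [hcK] at hc
    · exact h
  have hdm : N * (c / N) + c % N = c := Nat.div_add_mod c N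
  have hsN : c % N < N := Nat.mod_lt _ hN
  have htK : c / N < K := by
    by_contra h
    push_neg at h
    have := Nat.mul_le_mul_left N h
    omega
  obtain ⟨u, hu⟩ : ∃ u, K = c / N + 1 + u := ⟨K - (c / N) - 1, by omega⟩
  have hNK : N * K = N * (c / N) + N + N * u := by rw [hu]; ring
  have h2 : N * K - c = N * u + (N - c % N) := by omega
  rw [h2, Nat.mul_add_mod, Nat.mod_eq_of_lt (by omega)]

private lemma pow_mod_cyc (q m k : ℕ) (hq : 2 ≤ q) (hm : 1 ≤ m) :
    q ^ k % (q ^ m - 1) = q ^ (k % m) % (q ^ m - 1) := by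
  have h1 : 1 ≤ q ^ m := Nat.one_le_pow _ _ (by omega)
  have h : (1 : ℕ) ≡ q ^ m [MOD q ^ m - 1] :=
    (Nat.modEq_iff_dvd' h1).mpr dvd_rfl
  have key : q ^ k ≡ q ^ (k % m) [MOD q ^ m - 1] := by
    conv_lhs => rw [← Nat.div_add_mod k m, pow_add, pow_mul]
    calc (q ^ m) ^ (k / m) * q ^ (k % m)
        ≡ 1 ^ (k / m) * q ^ (k % m) [MOD q ^ m - 1] :=
          ((h.symm.pow (k / m)).mul_right _)
      _ = q ^ (k % m) := by rw [one_pow, one_mul]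
  exact key

private lemma pow_lt_aux (q m r : ℕ) (hq : 2 ≤ q) (hm : 2 ≤ m) (hr : r < m) :
    q ^ r < q ^ m - 1 := by
  have h1 : q ^ r ≤ q ^ (m - 1) := Nat.pow_le_pow_right (by omega) (by omega)
  have h2 : q ^ (m - 1) * 2 ≤ q ^ (m - 1) * q := Nat.mul_le_mul_left _ hq
  have h3 : q ^ (m - 1) * q = q ^ m := by rw [← pow_succ]; congr 1; omega
  have h4 : 2 ≤ q ^ (m - 1) := by
    calc 2 ≤ q := hq
      _ = q ^ 1 := (pow_one q).symm
      _ ≤ q ^ (m - 1) := Nat.pow_le_pow_right (by omega) (by omega)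
  omega

private lemma shift_mod (q m i j : ℕ) (hq : 2 ≤ q) (hm : 2 ≤ m) (hi : i < m) :
    ((q ^ m - 1 - q ^ i) * q ^ j) % (q ^ m - 1) = (q ^ m - 1) - q ^ ((i + j) % m) := by
  have hr : (i + j) % m < m := Nat.mod_lt _ (by omega)
  have hcmod : q ^ (i + j) % (q ^ m - 1) = q ^ ((i + j) % m) := by
    rw [pow_mod_cyc q m _ hq (by omega), Nat.mod_eq_of_lt (pow_lt_aux q m _ hq hm hr)]
  rw [Nat.sub_mul, ← pow_add]
  rw [key_mod (q ^ m - 1) (q ^ j) (q ^ (i + j))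
    (by rw [hcmod]; positivity)
    (by rw [pow_add]; exact Nat.mul_le_mul_right _ (le_of_lt (pow_lt_aux q m i hq hm hi)))]
  rw [hcmod]

private lemma ofDigits_compl (q : ℕ) (hq : 2 ≤ q) :
    ∀ L : List ℕ, (∀ d ∈ L, d < q) →
      Nat.ofDigits q L + Nat.ofDigits q (L.map (fun d => q - 1 - d)) = q ^ L.length - 1
       ∧ L.sum + (L.map (fun d => q - 1 - d)).sum = L.length * (q - 1)
  | [], _ => by simp
  | d :: L, h => by
    obtain ⟨ih1, ih2⟩ := ofDigits_compl q hq L (fun x hx => h x (List.mem_cons_of_mem _ hx))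
    have hd : d < q := h d List.mem_cons_self
    simp only [Nat.ofDigits_cons, List.map_cons, List.sum_cons, List.length_cons]
    have h1 : 1 ≤ q ^ L.length := Nat.one_le_pow _ _ (by omega)
    have h2 : q * Nat.ofDigits q L + q * Nat.ofDigits q (L.map (fun d => q - 1 - d))
        = q * (q ^ L.length - 1) := by
      rw [← Nat.mul_add, ih1]
    have h3 : q * q ^ L.length = q * (q ^ L.length - 1) + q := by
      have hx : q ^ L.length = (q ^ L.length - 1) + 1 := by omega
      conv_lhs => rw [hx]
      ring
    have h4 : q ^ (L.length + 1) = q * q ^ L.length := pow_succ' q _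
    have h5 : (L.length + 1) * (q - 1) = L.length * (q - 1) + (q - 1) := by ring
    constructor
    · omega
    · omega

private lemma ofDigits_sum_zero (q : ℕ) : ∀ L : List ℕ, L.sum = 0 → Nat.ofDigits q L = 0
  | [], _ => by simp
  | d :: L, h => by
    simp only [List.sum_cons] at h
    have hd : d = 0 := by omega
    have hL : L.sum = 0 := by omega
    simp [Nat.ofDigits_cons, hd, ofDigits_sum_zero q L hL]

private lemma ofDigits_sum_one (q : ℕ) : ∀ L : List ℕ, L.sum = 1 →
    ∃ i < L.length, Nat.ofDigits q L = q ^ i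
  | [], h => by simp at h
  | d :: L, h => by
    simp only [List.sum_cons] at h
    by_cases hd : d = 0
    · obtain ⟨i, hi, he⟩ := ofDigits_sum_one q L (by omega)
      refine ⟨i + 1, by simp; omega, ?_⟩
      simp [Nat.ofDigits_cons, hd, he, pow_succ']
    · have hd1 : d = 1 := by omega
      have hL : L.sum = 0 := by omega
      refine ⟨0, by simp, ?_⟩
      simp [Nat.ofDigits_cons, hd1, ofDigits_sum_zero q L hL]

/-- `δ = (q-1)q^(m-1) - 1` is a coset leader, and it is the unique coset
leader below `q^m - 1` whose `q`-adic digit sum equals `m(q-1) - 1`. -/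
theorem delta_unique_coset_leader_of_digit_sum
    (q m : ℕ) (hq : ∃ p k : ℕ, p.Prime ∧ 0 < k ∧ q = p ^ k) (hm : 2 ≤ m) :
    (∀ j : ℕ, (q - 1) * q ^ (m - 1) - 1 ≤
        (((q - 1) * q ^ (m - 1) - 1) * q ^ j) % (q ^ m - 1)) ∧
      ∀ θ : ℕ, θ < q ^ m - 1 → (Nat.digits q θ).sum = m * (q - 1) - 1 →
        (∀ j : ℕ, θ ≤ (θ * q ^ j) % (q ^ m - 1)) →
        θ = (q - 1) * q ^ (m - 1) - 1 := by
  have hq2 : 2 ≤ q := by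
    obtain ⟨p, k, hp, hk, rfl⟩ := hq
    calc 2 ≤ p := hp.two_le
      _ ≤ p ^ k := Nat.le_self_pow (by omega) p
  have hδ : (q - 1) * q ^ (m - 1) - 1 = q ^ m - 1 - q ^ (m - 1) := by
    have h1 : q * q ^ (m - 1) = q ^ m := by rw [← pow_succ']; congr 1; omega
    have h2 : (q - 1) * q ^ (m - 1) + q ^ (m - 1) = q ^ m := by
      calc (q - 1) * q ^ (m - 1) + q ^ (m - 1) = (q - 1 + 1) * q ^ (m - 1) := by ring
        _ = q * q ^ (m - 1) := by rw [show q - 1 + 1 = q by omega]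
        _ = q ^ m := h1
    have h3 : 1 ≤ q ^ (m - 1) := Nat.one_le_pow _ _ (by omega)
    have h4 : 1 ≤ q ^ m := Nat.one_le_pow _ _ (by omega)
    omega
  constructor
  · intro j
    rw [hδ, shift_mod q m (m - 1) j hq2 hm (by omega)]
    have hr : (m - 1 + j) % m < m := Nat.mod_lt _ (by omega)
    have h1 : q ^ ((m - 1 + j) % m) ≤ q ^ (m - 1) :=
      Nat.pow_le_pow_right (by omega) (by omega)
    have h2 : q ^ (m - 1) < q ^ m - 1 := pow_lt_aux q m _ hq2 hm (by omega)
    omega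
  · intro θ hθ hsum hcl
    set L := Nat.digits q θ with hLdef
    have hof : Nat.ofDigits q L = θ := Nat.ofDigits_digits q θ
    have hdig : ∀ d ∈ L, d < q := fun d hd => Nat.digits_lt_base hq2 hd
    have hlen : L.length ≤ m := by
      rcases Nat.eq_zero_or_pos θ with h0 | h0
      · subst h0; simp [hLdef]
      · have h1 : q ^ L.length ≤ q * θ := Nat.base_pow_length_digits_le q θ (by omega) (by omega)
        have h2 : q * θ < q * q ^ m := by
          have : θ < q ^ m := by
            have : 1 ≤ q ^ m := Nat.one_le_pow _ _ (by omega)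
            omega
          exact (Nat.mul_lt_mul_left (by omega : 0 < q)).mpr this
        have h3 : q * q ^ m = q ^ (m + 1) := (pow_succ' q m).symm
        have h4 : q ^ L.length < q ^ (m + 1) := by omega
        have := (Nat.pow_lt_pow_iff_right (by omega : 1 < q)).mp h4
        omega
    obtain ⟨hcompl, hsums⟩ := ofDigits_compl q hq2 L hdig
    rw [hof] at hcompl
    have hmq1 : 1 ≤ m * (q - 1) := by
      have : 1 * 1 ≤ m * (q - 1) := Nat.mul_le_mul (by omega) (by omega)
      omega
    have hs'le : (L.map (fun d => q - 1 - d)).sum ≤ 1 := by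
      have h1 : L.length * (q - 1) ≤ m * (q - 1) := Nat.mul_le_mul_right _ hlen
      omega
    obtain ⟨i, him, hθi⟩ : ∃ i < m, θ = q ^ m - 1 - q ^ i := by
      rcases (show (L.map (fun d => q - 1 - d)).sum = 0 ∨
          (L.map (fun d => q - 1 - d)).sum = 1 by omega) with h0 | h1
      · have hz : Nat.ofDigits q (L.map (fun d => q - 1 - d)) = 0 :=
          ofDigits_sum_zero q _ h0
        rw [hz] at hcompl
        have hℓm : L.length < m := by
          rcases Nat.lt_or_ge L.length m with h | h
          · exact h
          · have : L.length = m := le_antisymm hlen h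
            rw [this] at hsums
            omega
        have hle : L.length * (q - 1) ≤ (m - 1) * (q - 1) :=
          Nat.mul_le_mul_right _ (by omega)
        have hml : (m - 1) * (q - 1) + (q - 1) = m * (q - 1) := by
          have h' : (m - 1 + 1) * (q - 1) = (m - 1) * (q - 1) + (q - 1) := by ring
          rw [show m - 1 + 1 = m by omega] at h'
          omega
        have hq2' : q = 2 := by omega
        subst hq2'
        have hll : L.length = m - 1 := by omega
        rw [hll] at hcompl
        refine ⟨m - 1, by omega, ?_⟩
        have hp : (2 : ℕ) ^ m = 2 * 2 ^ (m - 1) := by rw [← pow_succ']; congr 1; omega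
        have h1 : 1 ≤ (2 : ℕ) ^ (m - 1) := Nat.one_le_pow _ _ (by omega)
        omega
      · obtain ⟨i, hiℓ, hqi⟩ := ofDigits_sum_one q _ h1
        rw [List.length_map] at hiℓ
        have hℓ : L.length = m := by
          have h2 : L.length * (q - 1) = m * (q - 1) := by omega
          exact Nat.eq_of_mul_eq_mul_right (by omega) h2
        rw [hqi, hℓ] at hcompl
        exact ⟨i, by omega, by omega⟩
    have hkey := hcl (m - 1 - i)
    rw [hθi, shift_mod q m i (m - 1 - i) hq2 hm him] at hkey
    have he : (i + (m - 1 - i)) % m = m - 1 := by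
      rw [show i + (m - 1 - i) = m - 1 by omega]
      exact Nat.mod_eq_of_lt (by omega)
    rw [he] at hkey
    have h1 : q ^ i < q ^ m - 1 := pow_lt_aux q m i hq2 hm him
    have h2 : q ^ (m - 1) < q ^ m - 1 := pow_lt_aux q m _ hq2 hm (by omega)
    have h3 : q ^ i ≤ q ^ (m - 1) := Nat.pow_le_pow_right (by omega) (by omega)
    rw [hθi, hδ]
    omega
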